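/- Converse stability for decomposable modules: let U ≅ ⊕_{ℓ∈L} I^{J_ℓ} and V ≅ ⊕_{m∈M} I^{K_m} be persistence modules over ℝ that are direct sums of interval modules. Let dgm(U) be the multiset of points (inf J_ℓ, sup J_ℓ) ∈ H° (inf and sup in the extended reals) over those ℓ with inf J_ℓ < sup J_ℓ, and similarly dgm(V) from the K_m. Then d_i(U, V) ≤ d_b(dgm(U), dgm(V)). -/

import Mathlib

attribute [local instance] Classical.propDecidable

structure PersMod (k : Type) [Field k] (T : Type) [Preorder T] where
  space : T → Type
  [addCommGroup : ∀ t, AddCommGroup (space t)]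
  [module : ∀ t, Module k (space t)]
  map : ∀ s t : T, s ≤ t → space s →ₗ[k] space t
  map_id : ∀ t, map t t le_rfl = LinearMap.id
  map_comp : ∀ r s t (h1 : r ≤ s) (h2 : s ≤ t),
    (map s t h2).comp (map r s h1) = map r t (h1.trans h2)

attribute [instance] PersMod.addCommGroup PersMod.module

def PersIso {k : Type} [Field k] {T : Type} [Preorder T] (U V : PersMod k T) : Prop :=
  ∃ e : ∀ t, U.space t ≃ₗ[k] V.space t,
    ∀ s t (h : s ≤ t),
      (e t).toLinearMap.comp (U.map s t h) = (V.map s t h).comp (e s).toLinearMap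

def IsIntervalSet {T : Type} [Preorder T] (J : Set T) : Prop :=
  J.Nonempty ∧ ∀ ⦃r s t : T⦄, r ∈ J → t ∈ J → r ≤ s → s ≤ t → s ∈ J

noncomputable def intervalModule (k : Type) [Field k] (T : Type) [Preorder T]
    (J : Set T) (hJ : IsIntervalSet J) : PersMod k T where
  space t := PLift (t ∈ J) → k
  addCommGroup := fun _ => inferInstance
  module := fun _ => inferInstance
  map s t _ :=
    { toFun := fun f _ => if hs : s ∈ J then f ⟨hs⟩ else 0
      map_add' := fun f g => by
        funext ht; by_cases hs : s ∈ J <;> simp [hs]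
      map_smul' := fun c f => by
        funext ht; by_cases hs : s ∈ J <;> simp [hs] }
  map_id t := by
    refine LinearMap.ext fun f => funext fun ht => ?_
    show (if hs : t ∈ J then f ⟨hs⟩ else 0) = f ht
    rw [dif_pos ht.down]
  map_comp r s t h1 h2 := by
    refine LinearMap.ext fun f => funext fun ht => ?_
    show (if hs : s ∈ J then (if hr : r ∈ J then f ⟨hr⟩ else 0) else 0)
        = (if hr : r ∈ J then f ⟨hr⟩ else 0)
    by_cases hr : r ∈ J
    · have hs : s ∈ J := hJ.2 hr ht.down h1 h2
      simp [hr, hs]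
    · by_cases hs : s ∈ J <;> simp [hr, hs]

noncomputable def dsum {k : Type} [Field k] {T : Type} [Preorder T] {L : Type}
    (V : L → PersMod k T) : PersMod k T where
  space t := DFinsupp (fun ℓ => (V ℓ).space t)
  addCommGroup := fun _ => inferInstance
  module := fun _ => inferInstance
  map s t h := DFinsupp.mapRange.linearMap (fun ℓ => (V ℓ).map s t h)
  map_id t := by
    show DFinsupp.mapRange.linearMap (fun ℓ => (V ℓ).map t t le_rfl) = LinearMap.id
    have : (fun ℓ => (V ℓ).map t t le_rfl)
        = fun ℓ => (LinearMap.id : (V ℓ).space t →ₗ[k] (V ℓ).space t) :=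
      funext fun ℓ => (V ℓ).map_id t
    rw [this]
    exact DFinsupp.mapRange.linearMap_id
  map_comp r s t h1 h2 := by
    show (DFinsupp.mapRange.linearMap (fun ℓ => (V ℓ).map s t h2)).comp
        (DFinsupp.mapRange.linearMap (fun ℓ => (V ℓ).map r s h1))
      = DFinsupp.mapRange.linearMap (fun ℓ => (V ℓ).map r t (h1.trans h2))
    rw [← DFinsupp.mapRange.linearMap_comp]
    congr 1
    funext ℓ
    exact (V ℓ).map_comp r s t h1 h2

open scoped ENNReal

section Dim

noncomputable def edim (k : Type) [Field k] (M : Type) [AddCommGroup M] [Module k M] : ℕ∞ :=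
  Cardinal.toENat (Module.rank k M)

noncomputable def erank {k : Type} [Field k] {M N : Type} [AddCommGroup M] [Module k M]
    [AddCommGroup N] [Module k N] (f : M →ₗ[k] N) : ℕ∞ :=
  edim k (LinearMap.range f)

noncomputable def ecard (S : Type) : ℕ∞ := Cardinal.toENat (Cardinal.mk S)

end Dim

section Matchings

noncomputable def eDiff (x y : EReal) : ℝ≥0∞ :=
  if x = y then 0
  else if x = ⊤ ∨ x = ⊥ ∨ y = ⊤ ∨ y = ⊥ then ⊤
  else ENNReal.ofReal |x.toReal - y.toReal|

noncomputable def dPt (α β : EReal × EReal) : ℝ≥0∞ :=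
  max (eDiff α.1 β.1) (eDiff α.2 β.2)

noncomputable def diagDist (α : EReal × EReal) : ℝ≥0∞ :=
  if α.1 = ⊥ ∨ α.2 = ⊤ then ⊤ else ENNReal.ofReal ((α.2.toReal - α.1.toReal) / 2)

def IsMatching {α β : Type} (M : Set (α × β)) : Prop :=
  (∀ a b b', (a, b) ∈ M → (a, b') ∈ M → b = b') ∧
  (∀ a a' b, (a, b) ∈ M → (a', b) ∈ M → a = a')

def IsDeltaMatching {α β : Type} (A : α → EReal × EReal) (B : β → EReal × EReal)
    (δ : ℝ≥0∞) : Prop :=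
  ∃ M : Set (α × β), IsMatching M ∧
    (∀ p ∈ M, dPt (A p.1) (B p.2) ≤ δ) ∧
    (∀ a, (∀ b, (a, b) ∉ M) → diagDist (A a) ≤ δ) ∧
    (∀ b, (∀ a, (a, b) ∉ M) → diagDist (B b) ≤ δ)

noncomputable def dBottle {α β : Type} (A : α → EReal × EReal) (B : β → EReal × EReal) : ℝ≥0∞ :=
  sInf {d : ℝ≥0∞ | ∃ δ : ℝ, 0 ≤ δ ∧ IsDeltaMatching A B (ENNReal.ofReal δ) ∧ d = ENNReal.ofReal δ}

end Matchings

section Measure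

noncomputable def persIm {k : Type} [Field k] (V : PersMod k ℝ) (a : EReal) (c : ℝ) :
    Submodule k (V.space c) :=
  if h : ∃ a' : ℝ, a = (a' : EReal) ∧ a' ≤ c then
    LinearMap.range (V.map h.choose c h.choose_spec.2)
  else ⊥

noncomputable def persKer {k : Type} [Field k] (V : PersMod k ℝ) (c : ℝ) (d : EReal) :
    Submodule k (V.space c) :=
  if h : ∃ d' : ℝ, d = (d' : EReal) ∧ c ≤ d' then
    LinearMap.ker (V.map c h.choose h.choose_spec.2)
  else ⊤

noncomputable def persMeasure {k : Type} [Field k] (V : PersMod k ℝ)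
    (a : EReal) (b c : ℝ) (d : EReal) : ℕ∞ :=
  edim k
    (↥(persIm V (b : EReal) c ⊓ persKer V c d) ⧸
      Submodule.comap (persIm V (b : EReal) c ⊓ persKer V c d).subtype
        (persIm V a c ⊓ persKer V c d))

end Measure

section Interleaving

def Interleaved (k : Type) [Field k] (U V : PersMod k ℝ) (δ : ℝ) : Prop :=
  ∃ (φ : ∀ t : ℝ, U.space t →ₗ[k] V.space (t + δ))
    (ψ : ∀ t : ℝ, V.space t →ₗ[k] U.space (t + δ)),
    (∀ s t (h : s ≤ t),
      (φ t).comp (U.map s t h) = (V.map (s + δ) (t + δ) (by linarith)).comp (φ s)) ∧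
    (∀ s t (h : s ≤ t),
      (ψ t).comp (V.map s t h) = (U.map (s + δ) (t + δ) (by linarith)).comp (ψ s)) ∧
    (∀ t (h : t ≤ t + δ + δ), (ψ (t + δ)).comp (φ t) = U.map t (t + δ + δ) h) ∧
    (∀ t (h : t ≤ t + δ + δ), (φ (t + δ)).comp (ψ t) = V.map t (t + δ + δ) h)

noncomputable def dInter (k : Type) [Field k] (U V : PersMod k ℝ) : ℝ≥0∞ :=
  sInf {d : ℝ≥0∞ | ∃ δ : ℝ, 0 ≤ δ ∧ Interleaved k U V δ ∧ d = ENNReal.ofReal δ}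

def QTame (k : Type) [Field k] (V : PersMod k ℝ) : Prop :=
  ∀ s t : ℝ, ∀ h : s < t, erank (V.map s t h.le) ≠ ⊤

def LocFinitePM (k : Type) [Field k] (W : PersMod k ℝ) : Prop :=
  ∃ (L : Type) (J : L → Set ℝ) (hJ : ∀ ℓ, IsIntervalSet (J ℓ)),
    PersIso W (dsum fun ℓ => intervalModule k ℝ (J ℓ) (hJ ℓ)) ∧
    ∀ S : Set ℝ, Bornology.IsBounded S → {ℓ : L | (J ℓ ∩ S).Nonempty}.Finite

noncomputable def zeroPers (k : Type) [Field k] : PersMod k ℝ where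
  space _ := PUnit
  addCommGroup := fun _ => inferInstance
  module := fun _ => inferInstance
  map _ _ _ := 0
  map_id t := LinearMap.ext fun x => Subsingleton.elim _ _
  map_comp r s t h1 h2 := LinearMap.ext fun x => Subsingleton.elim _ _

noncomputable def smoothing {k : Type} [Field k] (V : PersMod k ℝ) (ε : ℝ) (hε : 0 < ε) :
    PersMod k ℝ where
  space t := LinearMap.range (V.map (t - ε) (t + ε) (by linarith))
  addCommGroup := fun _ => inferInstance
  module := fun _ => inferInstance
  map s t h := LinearMap.restrict (V.map (s + ε) (t + ε) (by linarith))
    (p := LinearMap.range (V.map (s - ε) (s + ε) (by linarith)))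
    (q := LinearMap.range (V.map (t - ε) (t + ε) (by linarith)))
    (by
      rintro x ⟨y, rfl⟩
      refine ⟨V.map (s - ε) (t - ε) (by linarith) y, ?_⟩
      have h1 := LinearMap.congr_fun
        (V.map_comp (s - ε) (t - ε) (t + ε) (by linarith) (by linarith)) y
      have h2 := LinearMap.congr_fun
        (V.map_comp (s - ε) (s + ε) (t + ε) (by linarith) (by linarith)) y
      simp only [LinearMap.comp_apply] at h1 h2
      rw [h1, h2])
  map_id t := by
    refine LinearMap.ext fun x => Subtype.ext ?_
    have := LinearMap.congr_fun (V.map_id (t + ε)) x.1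
    simpa [LinearMap.restrict_apply] using this
  map_comp r s t h1 h2 := by
    refine LinearMap.ext fun x => Subtype.ext ?_
    have := LinearMap.congr_fun
      (V.map_comp (r + ε) (s + ε) (t + ε) (by linarith) (by linarith)) x.1
    simpa [LinearMap.restrict_apply] using this

end Interleaving

section Webb

def webbSubmodule (k : Type) [Field k] (t : ℤ) : Submodule k (ℕ → k) where
  carrier := {x | ∀ i : ℕ, (i : ℤ) < -t → x i = 0}
  add_mem' := by
    intro x y hx hy i hi
    simp [Pi.add_apply, hx i hi, hy i hi]
  zero_mem' := by
    intro i hi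
    rfl
  smul_mem' := by
    intro c x hx i hi
    simp [Pi.smul_apply, hx i hi]

noncomputable def webbModule (k : Type) [Field k] : PersMod k ↥{n : ℤ | n ≤ 0} where
  space t := ↥(webbSubmodule k t.1)
  addCommGroup := fun _ => inferInstance
  module := fun _ => inferInstance
  map s t h := Submodule.inclusion (by
    intro x hx
    have hx' : ∀ i : ℕ, (i : ℤ) < -s.1 → x i = 0 := hx
    intro i hi
    exact hx' i (lt_of_lt_of_le hi (neg_le_neg h)))
  map_id t := LinearMap.ext fun x => rfl
  map_comp r s t h1 h2 := LinearMap.ext fun x => rfl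

end Webb

section Decorated

/-- `decMem t x` : the real number `t` belongs to the interval described by the
decorated pair `x = ((p, εp), (q, εq))`, where the decoration `false` means `⁻`
and `true` means `⁺`. -/
def decMem (t : ℝ) (x : (EReal × Bool) × (EReal × Bool)) : Prop :=
  (x.1.1 < (t : EReal) ∨ (x.1.1 = (t : EReal) ∧ x.1.2 = false)) ∧
  ((t : EReal) < x.2.1 ∨ ((t : EReal) = x.2.1 ∧ x.2.2 = true))

/-- A valid decorated pair: the left coordinate is `p⁻`/`p⁺` for a real `p` or `−∞⁺`,
the right coordinate is `q⁻`/`q⁺` for a real `q` or `+∞⁻`, and the corresponding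
interval is nonempty (i.e. `p* < q*`). -/
def ValidDec (x : (EReal × Bool) × (EReal × Bool)) : Prop :=
  (x.1.1 = ⊥ → x.1.2 = true) ∧ x.1.1 ≠ ⊤ ∧ (x.2.1 = ⊤ → x.2.2 = false) ∧ x.2.1 ≠ ⊥ ∧
  {t : ℝ | decMem t x}.Nonempty

/-- The decorated pair `x` belongs to the rectangle `[a,b] × [c,d]`, i.e.
`[b,c] ⊆ ⟨p*,q*⟩ ⊆ (a,d)`. -/
def decInRect (x : (EReal × Bool) × (EReal × Bool)) (a : EReal) (b c : ℝ) (d : EReal) : Prop :=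
  (∀ t ∈ Set.Icc b c, decMem t x) ∧
  (∀ t : ℝ, decMem t x → a < (t : EReal) ∧ (t : EReal) < d)

/-- `Dgm` is (a labelling of) the decorated persistence diagram of `V`. -/
def IsDgmOf {k : Type} [Field k] (V : PersMod k ℝ) {ι : Type}
    (Dgm : ι → (EReal × Bool) × (EReal × Bool)) : Prop :=
  (∀ i, ValidDec (Dgm i)) ∧
  ∀ (a : EReal) (b c : ℝ) (d : EReal), a < (b : EReal) → b ≤ c → (c : EReal) < d →
    persMeasure V a b c d = ecard {i : ι // decInRect (Dgm i) a b c d}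

end Decorated

section RMeasure

/-- `[a,b] × [c,d]` is a (nondegenerate) rectangle contained in `D`. -/
def RectIn (D : Set (ℝ × ℝ)) (a b c d : ℝ) : Prop :=
  a < b ∧ c < d ∧ Set.Icc a b ×ˢ Set.Icc c d ⊆ D

/-- An r-measure on `D`: additivity under horizontal and vertical splitting. -/
def IsRMeasure (D : Set (ℝ × ℝ)) (μ : ℝ → ℝ → ℝ → ℝ → ℕ∞) : Prop :=
  (∀ a p b c d, a < p → p < b → RectIn D a b c d → μ a b c d = μ a p c d + μ p b c d) ∧
  (∀ a b c q d, c < q → q < d → RectIn D a b c d → μ a b c d = μ a b c q + μ a b q d)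

/-- Membership of a decorated point of the plane (`Bool` decoration: `true` = `⁺`,
`false` = `⁻`) in the closed rectangle `[a,b] × [c,d]`. -/
def dptMem (x : (ℝ × Bool) × (ℝ × Bool)) (a b c d : ℝ) : Prop :=
  a ≤ x.1.1 ∧ x.1.1 ≤ b ∧ c ≤ x.2.1 ∧ x.2.1 ≤ d ∧
  (x.1.1 = a → x.1.2 = true) ∧ (x.1.1 = b → x.1.2 = false) ∧
  (x.2.1 = c → x.2.2 = true) ∧ (x.2.1 = d → x.2.2 = false)

/-- The r-interior `D•` of `D`: decorated points contained in some rectangle of `D`. -/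
def rInt (D : Set (ℝ × ℝ)) : Set ((ℝ × Bool) × (ℝ × Bool)) :=
  {x | ∃ a b c d, RectIn D a b c d ∧ dptMem x a b c d}

/-- The number of decorated points, counted with multiplicity `m`, lying in the
rectangle `[a,b] × [c,d]`. -/
noncomputable def dcount (m : (ℝ × Bool) × (ℝ × Bool) → ℕ) (a b c d : ℝ) : ℕ∞ :=
  ecard (Σ x : {x : (ℝ × Bool) × (ℝ × Bool) // dptMem x a b c d}, Fin (m x.1))

end RMeasure

section Helpers

open scoped ENNReal

-- interval facts
lemma mem_interval_of_lt_of_lt {J : Set ℝ} (hJ : IsIntervalSet J) {t : ℝ}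
    (h1 : sInf (Real.toEReal '' J) < (t : EReal))
    (h2 : (t : EReal) < sSup (Real.toEReal '' J)) : t ∈ J := by
  obtain ⟨a', ha'J, ha'⟩ : ∃ a ∈ Real.toEReal '' J, a < (t : EReal) := by
    by_contra h
    push_neg at h
    exact absurd (le_sInf h) (not_le.2 h1)
  obtain ⟨a, haJ, rfl⟩ := ha'J
  obtain ⟨b', hb'J, hb'⟩ : ∃ b ∈ Real.toEReal '' J, (t : EReal) < b := by
    by_contra h
    push_neg at h
    exact absurd (sSup_le h) (not_le.2 h2)
  obtain ⟨b, hbJ, rfl⟩ := hb'J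
  exact hJ.2 haJ hbJ (le_of_lt (by exact_mod_cast ha')) (le_of_lt (by exact_mod_cast hb'))

lemma mem_interval_upper {J : Set ℝ} (hJ : IsIntervalSet J) {a t : ℝ}
    (ha : a ∈ J) (hat : a ≤ t)
    (h2 : (t : EReal) < sSup (Real.toEReal '' J)) : t ∈ J := by
  obtain ⟨b', hb'J, hb'⟩ : ∃ b ∈ Real.toEReal '' J, (t : EReal) < b := by
    by_contra h
    push_neg at h
    exact absurd (sSup_le h) (not_le.2 h2)
  obtain ⟨b, hbJ, rfl⟩ := hb'J
  exact hJ.2 ha hbJ hat (le_of_lt (by exact_mod_cast hb'))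

lemma mem_interval_lower {J : Set ℝ} (hJ : IsIntervalSet J) {b t : ℝ}
    (hb : b ∈ J) (htb : t ≤ b)
    (h1 : sInf (Real.toEReal '' J) < (t : EReal)) : t ∈ J := by
  obtain ⟨a', ha'J, ha'⟩ : ∃ a ∈ Real.toEReal '' J, a < (t : EReal) := by
    by_contra h
    push_neg at h
    exact absurd (le_sInf h) (not_le.2 h1)
  obtain ⟨a, haJ, rfl⟩ := ha'J
  exact hJ.2 haJ hb (le_of_lt (by exact_mod_cast ha')) htb

lemma sInf_le_of_mem {J : Set ℝ} {t : ℝ} (ht : t ∈ J) :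
    sInf (Real.toEReal '' J) ≤ (t : EReal) := sInf_le ⟨t, ht, rfl⟩

lemma le_sSup_of_mem {J : Set ℝ} {t : ℝ} (ht : t ∈ J) :
    (t : EReal) ≤ sSup (Real.toEReal '' J) := le_sSup ⟨t, ht, rfl⟩

-- EReal arithmetic helpers
lemma ereal_coe_sub_le {x c : ℝ} {a : EReal} (h : (x : EReal) ≤ a + (c : EReal)) :
    ((x - c : ℝ) : EReal) ≤ a := by
  induction a with
  | bot => simp at h
  | coe a =>
      rw [← EReal.coe_add, EReal.coe_le_coe_iff] at h
      rw [EReal.coe_le_coe_iff]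
      linarith
  | top => exact le_top

lemma eDiff_le_both {a b : EReal} {δ : ℝ} (hδ : 0 ≤ δ)
    (h : eDiff a b ≤ ENNReal.ofReal δ) :
    a ≤ b + (δ : EReal) ∧ b ≤ a + (δ : EReal) := by
  unfold eDiff at h
  split_ifs at h with h1 h2
  · subst h1
    constructor <;>
      exact le_add_of_nonneg_right (by exact_mod_cast hδ)
  · exact absurd h (by simp)
  · push_neg at h2
    obtain ⟨ha1, ha2, hb1, hb2⟩ := h2
    lift a to ℝ using ⟨ha1, ha2⟩ with a'
    lift b to ℝ using ⟨hb1, hb2⟩ with b'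
    rw [ENNReal.ofReal_le_ofReal_iff hδ] at h
    simp only [EReal.toReal_coe, abs_le] at h
    constructor
    · rw [← EReal.coe_add, EReal.coe_le_coe_iff]; linarith [h.1, h.2]
    · rw [← EReal.coe_add, EReal.coe_le_coe_iff]; linarith [h.1, h.2]

lemma diagDist_le {p q : EReal} {δ : ℝ} (hδ : 0 ≤ δ) (hpq : p < q)
    (h : diagDist (p, q) ≤ ENNReal.ofReal δ) :
    ∃ p' q' : ℝ, p = (p' : EReal) ∧ q = (q' : EReal) ∧ q' - p' ≤ 2 * δ := by
  unfold diagDist at h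
  split_ifs at h with h1
  · exact absurd h (by simp)
  · push_neg at h1
    obtain ⟨hp, hq⟩ := h1
    have hp2 : p ≠ ⊤ := hpq.ne_top
    have hq2 : q ≠ ⊥ := hpq.ne_bot
    lift p to ℝ using ⟨hp2, hp⟩ with p'
    lift q to ℝ using ⟨hq, hq2⟩ with q'
    rw [ENNReal.ofReal_le_ofReal_iff hδ] at h
    simp only [EReal.toReal_coe] at h
    exact ⟨p', q', rfl, rfl, by linarith⟩

end Helpers
section CanMap

noncomputable def canMap (k : Type) [Field k] (J K : Set ℝ) (s t : ℝ) :
    (PLift (s ∈ J) → k) →ₗ[k] (PLift (t ∈ K) → k) where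
  toFun f _ := if hs : s ∈ J then f ⟨hs⟩ else 0
  map_add' f g := by funext ht; by_cases hs : s ∈ J <;> simp [hs]
  map_smul' c f := by funext ht; by_cases hs : s ∈ J <;> simp [hs]

variable {k : Type} [Field k]

lemma canMap_apply {J K : Set ℝ} {s t : ℝ} (f : PLift (s ∈ J) → k) (ht : PLift (t ∈ K)) :
    canMap k J K s t f ht = if hs : s ∈ J then f ⟨hs⟩ else 0 := rfl

lemma intervalModule_map_eq (J : Set ℝ) (hJ : IsIntervalSet J) (s t : ℝ) (h : s ≤ t) :
    (intervalModule k ℝ J hJ).map s t h = canMap k J J s t := rfl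

lemma canMap_comp {I J K : Set ℝ} {r s t : ℝ}
    (h : r ∈ I → t ∈ K → s ∈ J) :
    (canMap k J K s t).comp (canMap k I J r s) = canMap k I K r t := by
  refine LinearMap.ext fun f => funext fun ht => ?_
  by_cases hr : r ∈ I
  · have hs := h hr ht.down
    simp [LinearMap.comp_apply, canMap_apply, hr, hs]
  · by_cases hs : s ∈ J <;> simp [LinearMap.comp_apply, canMap_apply, hr, hs]

lemma canMap_eq_zero_left {J K : Set ℝ} {s t : ℝ} (hs : s ∉ J) : canMap k J K s t = 0 := by
  refine LinearMap.ext fun f => funext fun ht => ?_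
  rw [canMap_apply, dif_neg hs]; rfl

lemma canMap_eq_zero_right {J K : Set ℝ} {s t : ℝ} (ht : t ∉ K) : canMap k J K s t = 0 :=
  LinearMap.ext fun f => funext fun h => absurd h.down ht

end CanMap

section Close

/-- Closeness of two intervals at scale δ. -/
def CloseInt (J K : Set ℝ) (δ : ℝ) : Prop :=
  eDiff (sInf (Real.toEReal '' J)) (sInf (Real.toEReal '' K)) ≤ ENNReal.ofReal δ ∧
  eDiff (sSup (Real.toEReal '' J)) (sSup (Real.toEReal '' K)) ≤ ENNReal.ofReal δ

lemma eDiff_comm (a b : EReal) : eDiff a b = eDiff b a := by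
  rcases eq_or_ne a b with h | h
  · rw [h]
  · unfold eDiff
    rw [if_neg h, if_neg (Ne.symm h)]
    split_ifs with h1 h2 h2
    · rfl
    · exact absurd (by tauto) h2
    · exact absurd (by tauto) h1
    · rw [abs_sub_comm]

lemma CloseInt.symm {J K : Set ℝ} {δ : ℝ} (h : CloseInt J K δ) : CloseInt K J δ :=
  ⟨by rw [eDiff_comm]; exact h.1, by rw [eDiff_comm]; exact h.2⟩

variable {J K : Set ℝ} {δ δ' : ℝ}

lemma close_a (hJ : IsIntervalSet J) (hδ : 0 ≤ δ) (hδ' : δ < δ')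
    (hc : CloseInt J K δ) {s t : ℝ} (hst : s ≤ t)
    (hs : s ∈ J) (ht : t + δ' ∈ K) : t ∈ J := by
  have h1 : ((t + δ' : ℝ) : EReal) ≤ sSup (Real.toEReal '' K) := le_sSup_of_mem ht
  have h2 := (eDiff_le_both hδ hc.2).2
  have h3 : ((t + δ' - δ : ℝ) : EReal) ≤ sSup (Real.toEReal '' J) :=
    ereal_coe_sub_le (h1.trans h2)
  exact mem_interval_upper hJ hs hst
    (lt_of_lt_of_le (by exact_mod_cast (by linarith : t < t + δ' - δ)) h3)

lemma close_b (hK : IsIntervalSet K) (hδ : 0 ≤ δ) (hδ' : δ < δ')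
    (hc : CloseInt J K δ) {s t : ℝ} (hst : s ≤ t)
    (hs : s ∈ J) (ht : t + δ' ∈ K) : s + δ' ∈ K := by
  have h1 : sInf (Real.toEReal '' J) ≤ (s : EReal) := sInf_le_of_mem hs
  have h2 := (eDiff_le_both hδ hc.1).1
  have h3 : sInf (Real.toEReal '' K) ≤ ((s + δ : ℝ) : EReal) := by
    calc sInf (Real.toEReal '' K) ≤ sInf (Real.toEReal '' J) + (δ : EReal) :=
          (eDiff_le_both hδ hc.1).2
      _ ≤ (s : EReal) + (δ : EReal) := add_le_add_left h1 _
      _ = ((s + δ : ℝ) : EReal) := (EReal.coe_add s δ).symm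
  exact mem_interval_lower hK ht (by linarith)
    (lt_of_le_of_lt h3 (by exact_mod_cast (by linarith : s + δ < s + δ')))

lemma close_c (hK : IsIntervalSet K) (hδ : 0 ≤ δ) (hδ' : δ < δ')
    (hc : CloseInt J K δ) {t : ℝ}
    (ht : t ∈ J) (ht2 : t + δ' + δ' ∈ J) : t + δ' ∈ K := by
  have hlo : sInf (Real.toEReal '' K) < ((t + δ' : ℝ) : EReal) := by
    calc sInf (Real.toEReal '' K) ≤ sInf (Real.toEReal '' J) + (δ : EReal) :=
          (eDiff_le_both hδ hc.1).2
      _ ≤ (t : EReal) + (δ : EReal) := add_le_add_left (sInf_le_of_mem ht) _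
      _ = ((t + δ : ℝ) : EReal) := (EReal.coe_add t δ).symm
      _ < ((t + δ' : ℝ) : EReal) := by exact_mod_cast (by linarith : t + δ < t + δ')
  have hhi : ((t + δ' : ℝ) : EReal) < sSup (Real.toEReal '' K) := by
    have h1 : ((t + δ' + δ' : ℝ) : EReal) ≤ sSup (Real.toEReal '' J) := le_sSup_of_mem ht2
    have h3 : ((t + δ' + δ' - δ : ℝ) : EReal) ≤ sSup (Real.toEReal '' K) :=
      ereal_coe_sub_le (h1.trans (eDiff_le_both hδ hc.2).1)
    exact lt_of_lt_of_le
      (by exact_mod_cast (by linarith : t + δ' < t + δ' + δ' - δ)) h3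
  exact mem_interval_of_lt_of_lt hK hlo hhi

/-- An interval close to the diagonal cannot contain both `t` and `t+δ'+δ'`. -/
lemma short_interval (hδ : 0 ≤ δ) (hδ' : δ < δ') {t : ℝ}
    (hshort : ¬ sInf (Real.toEReal '' J) < sSup (Real.toEReal '' J) ∨
      diagDist (sInf (Real.toEReal '' J), sSup (Real.toEReal '' J)) ≤ ENNReal.ofReal δ)
    (ht : t ∈ J) (ht2 : t + δ' + δ' ∈ J) : False := by
  have h1 : sInf (Real.toEReal '' J) ≤ (t : EReal) := sInf_le_of_mem ht
  have h2 : ((t + δ' + δ' : ℝ) : EReal) ≤ sSup (Real.toEReal '' J) := le_sSup_of_mem ht2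
  have hlt : sInf (Real.toEReal '' J) < sSup (Real.toEReal '' J) :=
    lt_of_le_of_lt h1 (lt_of_lt_of_le
      (by exact_mod_cast (by linarith : t < t + δ' + δ')) h2)
  rcases hshort with h | h
  · exact h hlt
  · obtain ⟨p', q', hp, hq, hd⟩ := diagDist_le hδ hlt h
    rw [hp] at h1
    rw [hq] at h2
    have : p' ≤ t := by exact_mod_cast h1
    have : t + δ' + δ' ≤ q' := by exact_mod_cast h2
    linarith

end Close
section Construct

variable {k : Type} [Field k] {L M : Type}

def swapM {α β : Type} (Ms : Set (α × β)) : Set (β × α) := {p | (p.2, p.1) ∈ Ms}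

abbrev MSet (J : L → Set ℝ) (K : M → Set ℝ) : Type :=
  Set ({ℓ : L // sInf (Real.toEReal '' (J ℓ)) < sSup (Real.toEReal '' (J ℓ))} ×
       {m : M // sInf (Real.toEReal '' (K m)) < sSup (Real.toEReal '' (K m))})

variable {J : L → Set ℝ} {K : M → Set ℝ}

def MRel (Ms : MSet J K) (ℓ : L) (m : M) : Prop :=
  ∃ hℓ hm, (⟨ℓ, hℓ⟩, ⟨m, hm⟩) ∈ Ms

lemma MRel_swap {Ms : MSet J K} {ℓ : L} {m : M} :
    MRel (swapM Ms) m ℓ ↔ MRel Ms ℓ m :=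
  ⟨fun ⟨hm, hℓ, h⟩ => ⟨hℓ, hm, h⟩, fun ⟨hℓ, hm, h⟩ => ⟨hm, hℓ, h⟩⟩

variable (hJ : ∀ ℓ, IsIntervalSet (J ℓ)) (hK : ∀ m, IsIntervalSet (K m))

noncomputable def gMap (Ms : MSet J K) (δ' t : ℝ) (ℓ : L) :
    (intervalModule k ℝ (J ℓ) (hJ ℓ)).space t →ₗ[k]
      (dsum fun m => intervalModule k ℝ (K m) (hK m)).space (t + δ') :=
  if h : ∃ m, MRel Ms ℓ m then
    (DFinsupp.lsingle h.choose).comp (canMap k (J ℓ) (K h.choose) t (t + δ'))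
  else 0

noncomputable def Φmap (Ms : MSet J K) (δ' t : ℝ) :
    (dsum fun ℓ => intervalModule k ℝ (J ℓ) (hJ ℓ)).space t →ₗ[k]
      (dsum fun m => intervalModule k ℝ (K m) (hK m)).space (t + δ') :=
  DFinsupp.lsum ℕ (fun ℓ => gMap hJ hK Ms δ' t ℓ)

lemma Φmap_comp_lsingle (Ms : MSet J K) (δ' t : ℝ) (ℓ : L) :
    (Φmap hJ hK Ms δ' t).comp
        (DFinsupp.lsingle (R := k)
          (M := fun ℓ => (intervalModule k ℝ (J ℓ) (hJ ℓ)).space t) ℓ)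
      = gMap hJ hK Ms δ' t ℓ :=
  congrFun (LinearEquiv.symm_apply_apply (DFinsupp.lsum ℕ)
    fun ℓ => gMap hJ hK Ms δ' t ℓ) ℓ

lemma gMap_pos (Ms : MSet J K) (δ' t : ℝ) {ℓ : L} (hm : ∃ m, MRel Ms ℓ m) :
    gMap hJ hK Ms δ' t ℓ
      = (DFinsupp.lsingle hm.choose).comp (canMap k (J ℓ) (K hm.choose) t (t + δ')) := by
  rw [gMap]
  exact dif_pos hm

lemma gMap_neg (Ms : MSet J K) (δ' t : ℝ) {ℓ : L} (hm : ¬ ∃ m, MRel Ms ℓ m) :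
    gMap (k := k) hJ hK Ms δ' t ℓ = 0 := by
  rw [gMap]
  exact dif_neg hm

lemma gMap_eq (Ms : MSet J K) (δ' t : ℝ) {ℓ : L} {m : M} (hrel : MRel Ms ℓ m)
    (huniq : ∀ m m', MRel Ms ℓ m → MRel Ms ℓ m' → m = m') :
    gMap hJ hK Ms δ' t ℓ
      = (DFinsupp.lsingle m).comp (canMap k (J ℓ) (K m) t (t + δ')) := by
  have hm : ∃ m, MRel Ms ℓ m := ⟨m, hrel⟩
  rw [gMap]
  refine (dif_pos hm).trans ?_
  have hc : hm.choose = m := huniq _ _ hm.choose_spec hrel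
  subst hc
  rfl

lemma dsum_map_comp_lsingle (V : L → PersMod k ℝ) (s t : ℝ) (h : s ≤ t) (ℓ : L) :
    ((dsum V).map s t h).comp (DFinsupp.lsingle ℓ)
      = (DFinsupp.lsingle ℓ).comp ((V ℓ).map s t h) := by
  refine LinearMap.ext fun x => ?_
  show DFinsupp.mapRange (fun i xi => (V i).map s t h xi) (fun i => map_zero _)
      (DFinsupp.single ℓ x) = DFinsupp.single ℓ ((V ℓ).map s t h x)
  exact DFinsupp.mapRange_single

lemma Φ_natural (Ms : MSet J K) {δ δ' : ℝ} (hδ : 0 ≤ δ) (hδ' : δ < δ')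
    (hclose : ∀ ℓ m, MRel Ms ℓ m → CloseInt (J ℓ) (K m) δ)
    (s t : ℝ) (h : s ≤ t) (h2 : s + δ' ≤ t + δ') :
    (Φmap hJ hK Ms δ' t).comp ((dsum fun ℓ => intervalModule k ℝ (J ℓ) (hJ ℓ)).map s t h)
      = (((dsum fun m => intervalModule k ℝ (K m) (hK m)).map (s + δ') (t + δ') h2)).comp
          (Φmap hJ hK Ms δ' s) := by
  refine DFinsupp.lhom_ext' fun ℓ => ?_
  erw [LinearMap.comp_assoc, dsum_map_comp_lsingle, ← LinearMap.comp_assoc,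
    Φmap_comp_lsingle, LinearMap.comp_assoc, Φmap_comp_lsingle]
  by_cases hm : ∃ m, MRel Ms ℓ m
  · rw [gMap_pos hJ hK Ms δ' t hm, gMap_pos hJ hK Ms δ' s hm]
    set m := hm.choose with hmdef
    have hrel : MRel Ms ℓ m := hm.choose_spec
    erw [intervalModule_map_eq, LinearMap.comp_assoc,
      canMap_comp (fun hs ht => close_a (hJ ℓ) hδ hδ' (hclose ℓ m hrel) h hs ht),
      ← LinearMap.comp_assoc, dsum_map_comp_lsingle, intervalModule_map_eq,
      LinearMap.comp_assoc,
      canMap_comp (fun hs ht => close_b (hK m) hδ hδ' (hclose ℓ m hrel) h hs ht)]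
  · rw [gMap_neg hJ hK Ms δ' t hm, gMap_neg hJ hK Ms δ' s hm]
    erw [LinearMap.zero_comp, LinearMap.comp_zero]

lemma Φ_comp (Ms : MSet J K) {δ δ' : ℝ} (hδ : 0 ≤ δ) (hδ' : δ < δ')
    (hclose : ∀ ℓ m, MRel Ms ℓ m → CloseInt (J ℓ) (K m) δ)
    (huniqL : ∀ ℓ ℓ' m, MRel Ms ℓ m → MRel Ms ℓ' m → ℓ = ℓ')
    (huniqR : ∀ ℓ m m', MRel Ms ℓ m → MRel Ms ℓ m' → m = m')
    (hshort : ∀ ℓ, (¬ ∃ m, MRel Ms ℓ m) →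
      (¬ sInf (Real.toEReal '' (J ℓ)) < sSup (Real.toEReal '' (J ℓ)) ∨
        diagDist (sInf (Real.toEReal '' (J ℓ)), sSup (Real.toEReal '' (J ℓ)))
          ≤ ENNReal.ofReal δ))
    (t : ℝ) (h : t ≤ t + δ' + δ') :
    (Φmap hK hJ (swapM Ms) δ' (t + δ')).comp (Φmap hJ hK Ms δ' t)
      = (dsum fun ℓ => intervalModule k ℝ (J ℓ) (hJ ℓ)).map t (t + δ' + δ') h := by
  refine DFinsupp.lhom_ext' fun ℓ => ?_
  erw [LinearMap.comp_assoc, Φmap_comp_lsingle, dsum_map_comp_lsingle,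
    intervalModule_map_eq]
  by_cases hm : ∃ m, MRel Ms ℓ m
  · obtain ⟨m, hrel⟩ := hm
    erw [gMap_eq hJ hK Ms δ' t hrel (fun m m' h1 h2 => huniqR ℓ m m' h1 h2),
      ← LinearMap.comp_assoc, Φmap_comp_lsingle,
      gMap_eq hK hJ (swapM Ms) δ' (t + δ') (MRel_swap.mpr hrel)
        (fun ℓ1 ℓ2 h1 h2 => huniqL ℓ1 ℓ2 m (MRel_swap.mp h1) (MRel_swap.mp h2)),
      LinearMap.comp_assoc,
      canMap_comp (fun ht ht2 => close_c (hK m) hδ hδ' (hclose ℓ m hrel) ht ht2)]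
    rfl
  · rw [gMap_neg hJ hK Ms δ' t hm]
    rw [LinearMap.comp_zero]
    have hz : canMap k (J ℓ) (J ℓ) t (t + δ' + δ') = 0 := by
      by_cases ht : t ∈ J ℓ
      · exact canMap_eq_zero_right fun ht2 => short_interval hδ hδ' (hshort ℓ hm) ht ht2
      · exact canMap_eq_zero_left ht
    erw [hz, LinearMap.comp_zero]
    rfl

end Construct
section Transfer

variable {k : Type} [Field k]

lemma persIso_map_symm {U U' : PersMod k ℝ} (e : ∀ t, U.space t ≃ₗ[k] U'.space t)
    (he : ∀ s t (h : s ≤ t), (e t).toLinearMap.comp (U.map s t h)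
      = (U'.map s t h).comp (e s).toLinearMap)
    (s t : ℝ) (h : s ≤ t) (x : U'.space s) :
    U.map s t h ((e s).symm x) = (e t).symm (U'.map s t h x) := by
  have h1 := LinearMap.congr_fun (he s t h) ((e s).symm x)
  simp only [LinearMap.comp_apply, LinearEquiv.coe_coe,
    LinearEquiv.apply_symm_apply] at h1
  rw [← h1, LinearEquiv.symm_apply_apply]

lemma interleaved_of_iso {U U' V V' : PersMod k ℝ} (hU : PersIso U U') (hV : PersIso V V')
    {δ : ℝ} (h : Interleaved k U' V' δ) : Interleaved k U V δ := by
  obtain ⟨e, he⟩ := hU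
  obtain ⟨f, hf⟩ := hV
  obtain ⟨φ, ψ, hφ, hψ, h1, h2⟩ := h
  have heP : ∀ s t (h : s ≤ t) x, e t (U.map s t h x) = U'.map s t h (e s x) := by
    intro s t h x
    simpa using LinearMap.congr_fun (he s t h) x
  have hfP : ∀ s t (h : s ≤ t) x, f t (V.map s t h x) = V'.map s t h (f s x) := by
    intro s t h x
    simpa using LinearMap.congr_fun (hf s t h) x
  refine ⟨fun t => (f (t + δ)).symm.toLinearMap.comp ((φ t).comp (e t).toLinearMap),
          fun t => (e (t + δ)).symm.toLinearMap.comp ((ψ t).comp (f t).toLinearMap),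
          ?_, ?_, ?_, ?_⟩
  · intro s t h
    refine LinearMap.ext fun x => ?_
    simp only [LinearMap.comp_apply, LinearEquiv.coe_coe]
    rw [heP s t h x]
    rw [show φ t (U'.map s t h (e s x))
        = V'.map (s + δ) (t + δ) (by linarith) (φ s (e s x)) by
      simpa using LinearMap.congr_fun (hφ s t h) (e s x)]
    rw [persIso_map_symm f hf (s + δ) (t + δ) (by linarith)]
  · intro s t h
    refine LinearMap.ext fun x => ?_
    simp only [LinearMap.comp_apply, LinearEquiv.coe_coe]
    rw [hfP s t h x]
    rw [show ψ t (V'.map s t h (f s x))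
        = U'.map (s + δ) (t + δ) (by linarith) (ψ s (f s x)) by
      simpa using LinearMap.congr_fun (hψ s t h) (f s x)]
    rw [persIso_map_symm e he (s + δ) (t + δ) (by linarith)]
  · intro t h
    refine LinearMap.ext fun x => ?_
    simp only [LinearMap.comp_apply, LinearEquiv.coe_coe,
      LinearEquiv.apply_symm_apply]
    rw [show ψ (t + δ) (φ t (e t x)) = U'.map t (t + δ + δ) h (e t x) by
      simpa using LinearMap.congr_fun (h1 t h) (e t x)]
    rw [← heP t (t + δ + δ) h x, LinearEquiv.symm_apply_apply]
  · intro t h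
    refine LinearMap.ext fun x => ?_
    simp only [LinearMap.comp_apply, LinearEquiv.coe_coe,
      LinearEquiv.apply_symm_apply]
    rw [show φ (t + δ) (ψ t (f t x)) = V'.map t (t + δ + δ) h (f t x) by
      simpa using LinearMap.congr_fun (h2 t h) (f t x)]
    rw [← hfP t (t + δ + δ) h x, LinearEquiv.symm_apply_apply]

end Transfer

section Assemble

variable {k : Type} [Field k] {L M : Type}

lemma interleaved_of_deltaMatching {J : L → Set ℝ} {K : M → Set ℝ}
    (hJ : ∀ ℓ, IsIntervalSet (J ℓ)) (hK : ∀ m, IsIntervalSet (K m))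
    {δ δ' : ℝ} (hδ : 0 ≤ δ) (hδ' : δ < δ')
    (hmatch : IsDeltaMatching
      (fun ℓ : {ℓ : L // sInf (Real.toEReal '' J ℓ) < sSup (Real.toEReal '' J ℓ)} =>
        (sInf (Real.toEReal '' J ℓ.1), sSup (Real.toEReal '' J ℓ.1)))
      (fun m : {m : M // sInf (Real.toEReal '' K m) < sSup (Real.toEReal '' K m)} =>
        (sInf (Real.toEReal '' K m.1), sSup (Real.toEReal '' K m.1)))
      (ENNReal.ofReal δ)) :
    Interleaved k (dsum fun ℓ => intervalModule k ℝ (J ℓ) (hJ ℓ))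
      (dsum fun m => intervalModule k ℝ (K m) (hK m)) δ' := by
  obtain ⟨Ms, hMs, hd, hA, hB⟩ := hmatch
  have hcloseJK : ∀ ℓ m, MRel Ms ℓ m → CloseInt (J ℓ) (K m) δ := by
    rintro ℓ m ⟨hℓ, hm2, hmem⟩
    have h2 := hd _ hmem
    simp only [dPt, max_le_iff] at h2
    exact ⟨h2.1, h2.2⟩
  have hcloseKJ : ∀ m ℓ, MRel (swapM Ms) m ℓ → CloseInt (K m) (J ℓ) δ :=
    fun m ℓ h => (hcloseJK ℓ m (MRel_swap.mp h)).symm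
  have huniqL : ∀ ℓ ℓ' m, MRel Ms ℓ m → MRel Ms ℓ' m → ℓ = ℓ' := by
    rintro ℓ ℓ' m ⟨hℓ, hm1, hmem⟩ ⟨hℓ', hm1', hmem'⟩
    have := hMs.2 ⟨ℓ, hℓ⟩ ⟨ℓ', hℓ'⟩ ⟨m, hm1⟩ hmem hmem'
    exact congrArg Subtype.val this
  have huniqR : ∀ ℓ m m', MRel Ms ℓ m → MRel Ms ℓ m' → m = m' := by
    rintro ℓ m m' ⟨hℓ, hm1, hmem⟩ ⟨hℓ', hm1', hmem'⟩
    have := hMs.1 ⟨ℓ, hℓ⟩ ⟨m, hm1⟩ ⟨m', hm1'⟩ hmem hmem'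
    exact congrArg Subtype.val this
  have huniqL' : ∀ m m' ℓ, MRel (swapM Ms) m ℓ → MRel (swapM Ms) m' ℓ → m = m' :=
    fun m m' ℓ h h' => huniqR ℓ m m' (MRel_swap.mp h) (MRel_swap.mp h')
  have huniqR' : ∀ m ℓ ℓ', MRel (swapM Ms) m ℓ → MRel (swapM Ms) m ℓ' → ℓ = ℓ' :=
    fun m ℓ ℓ' h h' => huniqL ℓ ℓ' m (MRel_swap.mp h) (MRel_swap.mp h')
  have hshortJ : ∀ ℓ, (¬ ∃ m, MRel Ms ℓ m) →
      (¬ sInf (Real.toEReal '' (J ℓ)) < sSup (Real.toEReal '' (J ℓ)) ∨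
        diagDist (sInf (Real.toEReal '' (J ℓ)), sSup (Real.toEReal '' (J ℓ)))
          ≤ ENNReal.ofReal δ) := by
    intro ℓ hno
    by_cases hℓ : sInf (Real.toEReal '' (J ℓ)) < sSup (Real.toEReal '' (J ℓ))
    · right
      exact hA ⟨ℓ, hℓ⟩ fun b hb => hno ⟨b.1, hℓ, b.2, hb⟩
    · left; exact hℓ
  have hshortK : ∀ m, (¬ ∃ ℓ, MRel (swapM Ms) m ℓ) →
      (¬ sInf (Real.toEReal '' (K m)) < sSup (Real.toEReal '' (K m)) ∨
        diagDist (sInf (Real.toEReal '' (K m)), sSup (Real.toEReal '' (K m)))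
          ≤ ENNReal.ofReal δ) := by
    intro m hno
    by_cases hm : sInf (Real.toEReal '' (K m)) < sSup (Real.toEReal '' (K m))
    · right
      exact hB ⟨m, hm⟩ fun a ha => hno ⟨a.1, hm, a.2, ha⟩
    · left; exact hm
  refine ⟨fun t => Φmap hJ hK Ms δ' t, fun t => Φmap hK hJ (swapM Ms) δ' t,
    ?_, ?_, ?_, ?_⟩
  · intro s t h
    exact Φ_natural hJ hK Ms hδ hδ' hcloseJK s t h (by linarith)
  · intro s t h
    exact Φ_natural hK hJ (swapM Ms) hδ hδ' hcloseKJ s t h (by linarith)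
  · intro t h
    exact Φ_comp hJ hK Ms hδ hδ' hcloseJK huniqL huniqR hshortJ t h
  · intro t h
    exact Φ_comp hK hJ (swapM Ms) hδ hδ' hcloseKJ huniqL' huniqR' hshortK t h

end Assemble
theorem stmt14 {k : Type} [Field k] {L M : Type} (J : L → Set ℝ) (K : M → Set ℝ)
    (hJ : ∀ ℓ, IsIntervalSet (J ℓ)) (hK : ∀ m, IsIntervalSet (K m))
    (U V : PersMod k ℝ)
    (hU : PersIso U (dsum fun ℓ => intervalModule k ℝ (J ℓ) (hJ ℓ)))
    (hV : PersIso V (dsum fun m => intervalModule k ℝ (K m) (hK m))) :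
    dInter k U V ≤
      dBottle
        (fun ℓ : {ℓ : L // sInf (Real.toEReal '' J ℓ) < sSup (Real.toEReal '' J ℓ)} =>
          (sInf (Real.toEReal '' J ℓ.1), sSup (Real.toEReal '' J ℓ.1)))
        (fun m : {m : M // sInf (Real.toEReal '' K m) < sSup (Real.toEReal '' K m)} =>
          (sInf (Real.toEReal '' K m.1), sSup (Real.toEReal '' K m.1))) := by
  refine le_sInf fun d hd => ?_
  obtain ⟨δ, hδ0, hmatch, rfl⟩ := hd
  refine ENNReal.le_of_forall_pos_le_add fun ε hε _ => ?_
  have hε' : (0 : ℝ) < (ε : ℝ) := by exact_mod_cast hε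
  have hδ' : δ < δ + ε := by linarith
  have hint : Interleaved k U V (δ + ε) :=
    interleaved_of_iso hU hV (interleaved_of_deltaMatching hJ hK hδ0 hδ' hmatch)
  have hle : dInter k U V ≤ ENNReal.ofReal (δ + ε) :=
    sInf_le ⟨δ + ε, by linarith, hint, rfl⟩
  calc dInter k U V ≤ ENNReal.ofReal (δ + ε) := hle
    _ = ENNReal.ofReal δ + ENNReal.ofReal ε :=
        ENNReal.ofReal_add hδ0 hε'.le
    _ = ENNReal.ofReal δ + ε := by rw [ENNReal.ofReal_coe_nnreal]
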